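/- Let d ≥ 1, λ < 0, ω > 0, ν ∈ ℝ, and let k > 0 satisfy k² + 2λk + ω² = 0. Then the function u(t,x) = e^{−ν/(2λ)} e^{−dk/(4λ)} e^{−k|x|²/2} e^{iνt} satisfies pointwise the equation i∂ₜu + (1/2)Δu = −ω²(|x|²/2)u + λ u ln(|u|²) for all (t,x) ∈ ℝ×ℝ^d. In particular each stationary Gausson φ_k generates a continuous family of solitary waves indexed by ν ∈ ℝ. -/

import Mathlib

/-- The Laplacian of a complex-valued function on `ℝ^d`, as the sum of second partial
derivatives in the coordinate directions. -/
noncomputable def clap {d : ℕ} (f : EuclideanSpace ℝ (Fin d) → ℂ)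
    (x : EuclideanSpace ℝ (Fin d)) : ℂ :=
  ∑ i : Fin d, iteratedFDeriv ℝ 2 f x ![EuclideanSpace.single i 1, EuclideanSpace.single i 1]

open Complex

variable {d : ℕ}

noncomputable abbrev E (d : ℕ) := EuclideanSpace ℝ (Fin d)

noncomputable def gfun (k : ℝ) (C : ℂ) : E d → ℂ :=
  fun y => C * Complex.exp ((-k * ‖y‖ ^ 2 / 2 : ℝ) : ℂ)

noncomputable def Lmap (d : ℕ) : E d →L[ℝ] (E d →L[ℝ] ℂ) :=
  (ContinuousLinearMap.compL ℝ (E d) ℝ ℂ Complex.ofRealCLM).comp (innerSL ℝ)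

noncomputable def Gmap (k : ℝ) (C : ℂ) : E d → (E d →L[ℝ] ℂ) :=
  fun y => (gfun k C y * (-k : ℂ)) • (Lmap d y)

lemma hasFDerivAt_gfun (k : ℝ) (C : ℂ) (y : E d) :
    HasFDerivAt (gfun k C) (Gmap k C y) y := by
  have h1 : HasFDerivAt (fun z : E d => -k * ‖z‖ ^ 2 / 2)
      ((-k) • (innerSL ℝ y)) y := by
    have := (hasStrictFDerivAt_norm_sq y).hasFDerivAt
    have h2 := this.const_mul (-k / 2)
    have h3 : (fun z : E d => -k / 2 * ‖z‖ ^ 2) = fun z : E d => -k * ‖z‖ ^ 2 / 2 := by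
      ext z; ring
    rw [h3] at h2
    refine h2.congr_fderiv ?_
    ext v
    simp [smul_smul]
    ring
  have h2 : HasFDerivAt (fun z : E d => ((-k * ‖z‖ ^ 2 / 2 : ℝ) : ℂ))
      (Complex.ofRealCLM.comp ((-k) • (innerSL ℝ y))) y :=
    Complex.ofRealCLM.hasFDerivAt.comp y h1
  have h3 := (h2.cexp).const_mul C
  refine h3.congr_fderiv ?_
  ext v
  simp [Gmap, gfun, Lmap]
  ring

lemma hasFDerivAt_Gmap (k : ℝ) (C : ℂ) (x : E d) :
    HasFDerivAt (Gmap k C (d := d))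
      ((gfun k C x * (-k : ℂ)) • (Lmap d) +
        (((-k : ℂ)) • (Gmap k C x)).smulRight (Lmap d x)) x := by
  have hc : HasFDerivAt (fun y : E d => gfun k C y * (-k : ℂ))
      (((-k : ℂ)) • (Gmap k C x)) x := by
    have := (hasFDerivAt_gfun k C x).mul_const (-k : ℂ)
    convert this using 1
  exact hc.smul (Lmap d).hasFDerivAt

lemma clap_gfun (k : ℝ) (C : ℂ) (x : E d) :
    clap (gfun k C) x = gfun k C x * ((k ^ 2 * ‖x‖ ^ 2 - d * k : ℝ) : ℂ) := by
  have hfd : fderiv ℝ (gfun k C (d := d)) = Gmap k C := by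
    funext y; exact (hasFDerivAt_gfun k C y).fderiv
  unfold clap
  have key : ∀ i : Fin d,
      iteratedFDeriv ℝ 2 (gfun k C) x
        ![EuclideanSpace.single i 1, EuclideanSpace.single i 1]
      = gfun k C x * ((k ^ 2 * (x i) ^ 2 - k : ℝ) : ℂ) := by
    intro i
    rw [iteratedFDeriv_two_apply, hfd, (hasFDerivAt_Gmap k C x).fderiv]
    simp only [Matrix.cons_val_zero, Matrix.cons_val_one, Matrix.head_cons]
    simp [Lmap, Gmap, ContinuousLinearMap.smul_apply, ContinuousLinearMap.add_apply,
      ContinuousLinearMap.smulRight_apply, real_inner_comm,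
      EuclideanSpace.inner_single_left, EuclideanSpace.inner_single_right]
    push_cast
    ring
  rw [Finset.sum_congr rfl fun i _ => key i]
  rw [← Finset.mul_sum]
  congr 1
  push_cast
  have h : ∑ i : Fin d, (x i) ^ 2 = ‖x‖ ^ 2 := by
    rw [EuclideanSpace.real_norm_sq_eq]
  have h2 : (∑ i : Fin d, ((x i : ℝ) : ℂ) ^ 2) = ((‖x‖ : ℝ) : ℂ) ^ 2 := by
    norm_cast
  rw [Finset.sum_sub_distrib, ← Finset.mul_sum, h2, Finset.sum_const, Finset.card_univ,
    Fintype.card_fin, nsmul_eq_mul]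


/-- For `λ < 0`, `ω > 0`, `ν ∈ ℝ` and `k > 0` a root of `k² + 2λk + ω² = 0`, the function
`u(t,x) = e^{−ν/(2λ)} e^{−dk/(4λ)} e^{−k|x|²/2} e^{iνt}` solves pointwise the logarithmic
Schrödinger equation `i∂ₜu + (1/2)Δu = −ω²(|x|²/2)u + λ u ln(|u|²)`: each stationary
Gausson generates a continuous family of solitary waves indexed by `ν`. -/
theorem gausson_solitary_wave_family
    (d : ℕ) (hd : 1 ≤ d) (lam ω k ν : ℝ) (hlam : lam < 0) (hω : 0 < ω)
    (hk : 0 < k) (hroot : k ^ 2 + 2 * lam * k + ω ^ 2 = 0)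
    (u : ℝ → EuclideanSpace ℝ (Fin d) → ℂ)
    (hu : ∀ t x, u t x =
      ((Real.exp (-ν / (2 * lam)) * Real.exp (-(d * k) / (4 * lam))
        * Real.exp (-k * ‖x‖ ^ 2 / 2) : ℝ) : ℂ) * Complex.exp (Complex.I * ν * t)) :
    ∀ t x, Complex.I * deriv (fun s => u s x) t + (1 / 2 : ℂ) * clap (u t) x
      = -((ω : ℂ) ^ 2) * ((‖x‖ ^ 2 / 2 : ℝ) : ℂ) * u t x
        + (lam : ℂ) * (u t x * ((Real.log (‖u t x‖ ^ 2) : ℝ) : ℂ)) := by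
  intro t x
  have hCfun : u t = gfun k (((Real.exp (-ν / (2 * lam)) * Real.exp (-(d * k) / (4 * lam)) : ℝ) : ℂ)
      * Complex.exp (Complex.I * ν * t)) := by
    funext y
    rw [hu, gfun]
    push_cast [Complex.ofReal_exp]
    ring_nf
  -- time derivative
  have htime : deriv (fun s => u s x) t = u t x * (Complex.I * ν) := by
    have hfun : (fun s : ℝ => u s x)
        = fun s : ℝ => ((Real.exp (-ν / (2 * lam)) * Real.exp (-(d * k) / (4 * lam))
          * Real.exp (-k * ‖x‖ ^ 2 / 2) : ℝ) : ℂ) * Complex.exp (Complex.I * ν * s) :=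
      funext fun s => hu s x
    have h0 : HasDerivAt (fun s : ℝ => ((s : ℝ) : ℂ)) 1 t := by
      simpa using (hasDerivAt_id t).ofReal_comp
    have h1 := (h0.const_mul (Complex.I * (ν : ℂ))).cexp
    have h2 := h1.const_mul ((Real.exp (-ν / (2 * lam)) * Real.exp (-(d * k) / (4 * lam))
          * Real.exp (-k * ‖x‖ ^ 2 / 2) : ℝ) : ℂ)
    rw [hfun]
    rw [h2.deriv, hu]
    push_cast
    ring
  -- Laplacian
  have hlap : clap (u t) x = u t x * ((k ^ 2 * ‖x‖ ^ 2 - d * k : ℝ) : ℂ) := by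
    rw [hCfun, clap_gfun]
  -- modulus and logarithm
  have habs : ‖u t x‖
      = Real.exp (-ν / (2 * lam) + -(d * k) / (4 * lam) + -k * ‖x‖ ^ 2 / 2) := by
    rw [hu]
    rw [norm_mul, Complex.norm_exp]
    have : (Complex.I * ν * t).re = 0 := by simp
    rw [this, Real.exp_zero, mul_one, Complex.norm_real, Real.norm_eq_abs, Real.exp_add, Real.exp_add,
      abs_of_pos (by positivity)]
  have hlog : Real.log (‖u t x‖ ^ 2)
      = 2 * (-ν / (2 * lam) + -(d * k) / (4 * lam) + -k * ‖x‖ ^ 2 / 2) := by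
    rw [habs, ← Real.exp_nat_mul]
    · rw [Real.log_exp]; push_cast; ring
  have hlam' : (lam : ℝ) ≠ 0 := ne_of_lt hlam
  have hlamscal : lam * (2 * (-ν / (2 * lam) + -(d * k) / (4 * lam) + -k * ‖x‖ ^ 2 / 2))
      = -ν + -(d * k) / 2 + -(lam * k) * ‖x‖ ^ 2 := by
    field_simp
    ring
  rw [htime, hlap, hlog]
  have hrootC : (k : ℂ) ^ 2 + 2 * (lam : ℂ) * k + (ω : ℂ) ^ 2 = 0 := by
    exact_mod_cast congrArg (Complex.ofReal) hroot
  have hlamC : (lam : ℂ) * ((2 * (-ν / (2 * lam) + -(d * k) / (4 * lam) + -k * ‖x‖ ^ 2 / 2) : ℝ) : ℂ)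
      = ((-ν + -(d * k) / 2 + -(lam * k) * ‖x‖ ^ 2 : ℝ) : ℂ) := by
    exact_mod_cast congrArg (Complex.ofReal) hlamscal
  push_cast [Complex.ofReal_exp] at hlamC ⊢
  linear_combination (u t x * ((‖x‖ : ℂ)) ^ 2 / 2) * hrootC - u t x * hlamC + (u t x * (ν : ℂ)) * Complex.I_sq
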